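/- Let X be a Hausdorff locally convex space, and let {F_ι}_{ι∈I} and {G_κ}_{κ∈K} be two families of linear operators X → X, each sequentially equicontinuous. Then the family of all compositions {F_ι ∘ G_κ}_{(ι,κ)∈I×K} is sequentially equicontinuous. -/

import Mathlib

open Filter Topology

/-- The compositions of two sequentially equicontinuous families of linear
operators on a Hausdorff locally convex space form a sequentially equicontinuous family. -/
theorem stmt3 {X : Type*}
    [AddCommGroup X] [Module ℝ X] [TopologicalSpace X] [IsTopologicalAddGroup X]
    [ContinuousSMul ℝ X] [LocallyConvexSpace ℝ X] [T2Space X]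
    {I K : Type*} (F : I → X →ₗ[ℝ] X) (G : K → X →ₗ[ℝ] X)
    (hF : ∀ (u : ℕ → X) (a : X), Tendsto u atTop (𝓝 a) → ∀ U ∈ 𝓝 (0 : X),
      ∀ᶠ n in atTop, ∀ i, F i (u n) - F i a ∈ U)
    (hG : ∀ (u : ℕ → X) (a : X), Tendsto u atTop (𝓝 a) → ∀ U ∈ 𝓝 (0 : X),
      ∀ᶠ n in atTop, ∀ k, G k (u n) - G k a ∈ U) :
    ∀ (u : ℕ → X) (a : X), Tendsto u atTop (𝓝 a) → ∀ U ∈ 𝓝 (0 : X),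
      ∀ᶠ n in atTop, ∀ p : I × K, F p.1 (G p.2 (u n)) - F p.1 (G p.2 a) ∈ U := by
  intro u a hu U hU
  by_contra h
  rw [Filter.not_eventually] at h
  obtain ⟨φ, hφ, hφp⟩ := Filter.extraction_of_frequently_atTop h
  simp only [not_forall] at hφp
  choose p hp using hφp
  set w : ℕ → X := fun j => G (p j).2 (u (φ j)) - G (p j).2 a with hw
  have hw0 : Tendsto w atTop (𝓝 (0 : X)) := by
    intro V hV
    rw [Filter.mem_map]
    have h2 := (hG u a hu V hV)
    have h3 : ∀ᶠ j in atTop, ∀ k, G k (u (φ j)) - G k a ∈ V :=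
      hφ.tendsto_atTop.eventually h2
    filter_upwards [h3] with j hj
    exact hj (p j).2
  have h4 := hF w 0 hw0 U hU
  simp only [map_zero, sub_zero] at h4
  obtain ⟨j, hj⟩ := h4.exists
  have := hj (p j).1
  rw [hw] at this
  rw [map_sub] at this
  exact hp j this
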